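/- For each β ≠ 0 and each (θ₁,θ₂) ∈ (0,1)², the number R_β(θ₁,θ₂) = −(1/β) ln(1 − (1−e^{−βθ₁})(1−e^{−βθ₂})/(1−e^{−β})) lies in the open interval (max{0,θ₁+θ₂−1}, min{θ₁,θ₂}), and t = R_β(θ₁,θ₂) is the unique critical point of t ↦ Φ_β(θ₁,θ₂;t) on the interior of I_{θ₁,θ₂}, i.e. the unique solution there of ∂Φ_β(θ₁,θ₂;t)/∂t = 0. -/

import Mathlib

open MeasureTheory Real Set Filter ENNReal
open scoped Classical

noncomputable section

/-- Lebesgue measure on `[0,1]` (as a measure on `ℝ`). -/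
def lamI : Measure ℝ := volume.restrict (Set.Icc (0:ℝ) 1)

/-- Lebesgue measure on `[0,1]²` (as a measure on `ℝ × ℝ`). -/
def lam2 : Measure (ℝ × ℝ) := lamI.prod lamI

/-- The pair interaction `h((x₁,y₁),(x₂,y₂))`. -/
def hfun (p q : ℝ × ℝ) : ℝ := if (p.1 - q.1) * (p.2 - q.2) < 0 then 1 else 0

/-- The limiting pressure `p(β)`, interpreted as `0` at `β = 0`. -/
def pP (β : ℝ) : ℝ :=
  if β = 0 then 0 else ∫ x in (0:ℝ)..1, Real.log ((1 - Real.exp (-β * x)) / (β * x))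

/-- The relative entropy `S(ν | λ⊗²) ∈ ℝ ∪ {−∞}` for measures on `[0,1]²`. -/
def Srel2 (ν : Measure (ℝ × ℝ)) : EReal :=
  if ν ≪ lam2 then (((- ∫ p, Real.log ((ν.rnDeriv lam2 p).toReal) ∂ν) : ℝ) : EReal) else ⊥

/-- The relative entropy `S(μ | λ) ∈ ℝ ∪ {−∞}` for measures on `[0,1]`. -/
def Srel1 (μ : Measure ℝ) : EReal :=
  if μ ≪ lamI then (((- ∫ x, Real.log ((μ.rnDeriv lamI x).toReal) ∂μ) : ℝ) : EReal) else ⊥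

/-- The mean-field energy `ℰ(ν)`. -/
def energy (ν : Measure (ℝ × ℝ)) : ℝ := (1 / 2) * ∫ p, ∫ q, hfun p q ∂ν ∂ν

/-- The large deviation rate function `I_β(ν) = −(S(ν|λ⊗²) − β ℰ(ν) − p(β))`. -/
def rate (β : ℝ) (ν : Measure (ℝ × ℝ)) : EReal :=
  -(Srel2 ν - ((β * energy ν : ℝ) : EReal) - ((pP β : ℝ) : EReal))

/-- The explicit four-square value `Φ̃_β(θ₁,θ₂;t₁₁,t₁₂,t₂₁,t₂₂)`. -/
def Phit (β θ₁ θ₂ t₁₁ t₁₂ t₂₁ t₂₂ : ℝ) : ℝ :=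
  pP β + t₁₁ * Real.log (t₁₁ / (θ₁ * θ₂)) + t₁₂ * Real.log (t₁₂ / (θ₁ * (1 - θ₂)))
    + t₂₁ * Real.log (t₂₁ / ((1 - θ₁) * θ₂)) + t₂₂ * Real.log (t₂₂ / ((1 - θ₁) * (1 - θ₂)))
    + t₁₁ * pP (β * t₁₁) + t₁₂ * pP (β * t₁₂) + t₂₁ * pP (β * t₂₁) + t₂₂ * pP (β * t₂₂)
    - (t₁₁ + t₁₂) * pP (β * (t₁₁ + t₁₂)) - (t₁₁ + t₂₁) * pP (β * (t₁₁ + t₂₁))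
    - (t₁₂ + t₂₂) * pP (β * (t₁₂ + t₂₂)) - (t₂₁ + t₂₂) * pP (β * (t₂₁ + t₂₂))
    + β * t₁₂ * t₂₁

/-- The one-parameter reduction `Φ_β(θ₁,θ₂;t)`. -/
def Phi (β θ₁ θ₂ t : ℝ) : ℝ := Phit β θ₁ θ₂ t (θ₁ - t) (θ₂ - t) (1 - θ₁ - θ₂ + t)


/-- The optimal four-square value `R_β(θ₁,θ₂)`. -/
def Rfun (β θ₁ θ₂ : ℝ) : ℝ :=
  -(1 / β) * Real.log (1 - (1 - Real.exp (-β * θ₁)) * (1 - Real.exp (-β * θ₂)) / (1 - Real.exp (-β)))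

open Topology

def gfun (u : ℝ) : ℝ := Real.log ((1 - Real.exp (-u)) / u)

lemma gfun_cont : Continuous gfun := by
  rw [continuous_iff_continuousAt]
  intro u
  rcases eq_or_ne u 0 with hu | hu
  · subst hu
    have h0 : gfun 0 = 0 := by simp [gfun]
    rw [ContinuousAt, h0]
    nth_rewrite 1 [← nhdsNE_sup_pure (0:ℝ)]
    rw [tendsto_sup]
    constructor
    · have hslope : Tendsto (slope Real.exp 0) (𝓝[≠] 0) (𝓝 1) := by
        have := (Real.hasDerivAt_exp 0)
        rw [hasDerivAt_iff_tendsto_slope] at this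
        simpa using this
      have hneg : Tendsto (fun u : ℝ => -u) (𝓝[≠] (0:ℝ)) (𝓝[≠] (0:ℝ)) := by
        refine tendsto_nhdsWithin_of_tendsto_nhds_of_eventually_within _ ?_ ?_
        · simpa using (continuous_neg.tendsto (0:ℝ)).mono_left nhdsWithin_le_nhds
        · filter_upwards [self_mem_nhdsWithin] with x hx
          simpa using hx
      have hG : Tendsto (fun u : ℝ => (1 - Real.exp (-u)) / u) (𝓝[≠] 0) (𝓝 1) := by
        have := hslope.comp hneg
        refine this.congr (fun x => ?_)
        simp only [Function.comp, slope_fun_def_field, Real.exp_zero, sub_zero]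
        rw [div_neg, ← neg_div, neg_sub]
      have := (Real.continuousAt_log (by norm_num : (1:ℝ) ≠ 0)).tendsto.comp hG
      simp only [Real.log_one] at this; exact this
    · simpa [h0] using tendsto_pure_nhds gfun 0
  · have h1 : (1 - Real.exp (-u)) / u ≠ 0 := by
      apply div_ne_zero _ hu
      intro h
      have : Real.exp (-u) = 1 := by linarith [sub_eq_zero.mp h]
      rw [Real.exp_eq_one_iff] at this
      exact hu (by linarith)
    have h2 : ContinuousAt (fun u : ℝ => (1 - Real.exp (-u)) / u) u :=
      ((continuous_const.sub (Real.continuous_exp.comp continuous_neg)).continuousAt).div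
        continuousAt_id hu
    exact h2.log h1

lemma F_repr (β : ℝ) (hβ : β ≠ 0) (s : ℝ) :
    s * pP (β * s) = β⁻¹ * ∫ u in (0:ℝ)..(β * s), gfun u := by
  rcases eq_or_ne s 0 with hs | hs
  · simp [hs]
  · have hbs : β * s ≠ 0 := mul_ne_zero hβ hs
    have : pP (β * s) = ∫ x in (0:ℝ)..1, gfun (β * s * x) := by
      rw [pP, if_neg hbs]
      congr 1; ext x; rw [gfun]; ring_nf
    rw [this, intervalIntegral.integral_comp_mul_left _ hbs]
    simp only [mul_zero, mul_one, smul_eq_mul]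
    field_simp

lemma F_hasDeriv (β : ℝ) (hβ : β ≠ 0) (s : ℝ) :
    HasDerivAt (fun s => s * pP (β * s)) (gfun (β * s)) s := by
  have hfun : (fun s => s * pP (β * s)) = fun s => β⁻¹ * ∫ u in (0:ℝ)..(β * s), gfun u := by
    ext y; exact F_repr β hβ y
  rw [hfun]
  have hint : HasDerivAt (fun y : ℝ => ∫ u in (0:ℝ)..y, gfun u) (gfun (β * s)) (β * s) :=
    intervalIntegral.integral_hasDerivAt_right
      (gfun_cont.intervalIntegrable _ _)
      (gfun_cont.stronglyMeasurableAtFilter _ _)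
      gfun_cont.continuousAt
  have hmul : HasDerivAt (fun y : ℝ => β * y) β s := by
    simpa using (hasDerivAt_id s).const_mul β
  have := (hint.comp s hmul).const_mul β⁻¹
  exact this.congr_deriv (by field_simp)

lemma entropy_hasDeriv (c t : ℝ) (ht : t ≠ 0) (hc : c ≠ 0) :
    HasDerivAt (fun s : ℝ => s * Real.log (s / c)) (Real.log (t / c) + 1) t := by
  have h1 : HasDerivAt (fun s : ℝ => s / c) (1 / c) t := by
    simpa using (hasDerivAt_id t).div_const c
  have h2 : HasDerivAt (fun s : ℝ => Real.log (s / c)) ((t / c)⁻¹ * (1 / c)) t :=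
    by have := (Real.hasDerivAt_log (div_ne_zero ht hc)).comp t h1; exact this
  have h3 := (hasDerivAt_id t).mul h2
  have he : 1 * Real.log (t / c) + t * ((t / c)⁻¹ * (1 / c)) = Real.log (t / c) + 1 := by
    field_simp
  rw [← he]
  exact h3

lemma one_sub_exp_neg_ne (u : ℝ) (hu : u ≠ 0) : 1 - Real.exp (-u) ≠ 0 := by
  intro h
  have : Real.exp (-u) = 1 := by linarith
  rw [Real.exp_eq_one_iff] at this
  exact hu (by linarith)

lemma one_sub_exp_neg_pos (u : ℝ) (hu : 0 < u) : 0 < 1 - Real.exp (-u) := by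
  have : Real.exp (-u) < 1 := Real.exp_lt_one_iff.mpr (by linarith)
  linarith

lemma one_sub_exp_neg_neg (u : ℝ) (hu : u < 0) : 1 - Real.exp (-u) < 0 := by
  have : 1 < Real.exp (-u) := Real.one_lt_exp_iff.mpr (by linarith)
  linarith

lemma one_sub_exp_mul_pos (u v : ℝ) (h : 0 < u * v) :
    0 < (1 - Real.exp (-u)) * (1 - Real.exp (-v)) := by
  rcases mul_pos_iff.mp h with ⟨hu, hv⟩ | ⟨hu, hv⟩
  · exact mul_pos (one_sub_exp_neg_pos _ hu) (one_sub_exp_neg_pos _ hv)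
  · exact mul_pos_of_neg_of_neg (one_sub_exp_neg_neg _ hu) (one_sub_exp_neg_neg _ hv)

set_option maxHeartbeats 2000000 in
/-- For `β ≠ 0` and `(θ₁,θ₂) ∈ (0,1)²`, `R_β(θ₁,θ₂)` lies in the open interval
`(max{0,θ₁+θ₂−1}, min{θ₁,θ₂})` and is the unique critical point of `t ↦ Φ_β(θ₁,θ₂;t)`
on the interior of `I_{θ₁,θ₂}`. -/
theorem statement6 (β θ₁ θ₂ : ℝ) (hβ : β ≠ 0)
    (hθ₁ : θ₁ ∈ Set.Ioo (0:ℝ) 1) (hθ₂ : θ₂ ∈ Set.Ioo (0:ℝ) 1) :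
    Rfun β θ₁ θ₂ ∈ Set.Ioo (max 0 (θ₁ + θ₂ - 1)) (min θ₁ θ₂) ∧
    ∀ t ∈ Set.Ioo (max 0 (θ₁ + θ₂ - 1)) (min θ₁ θ₂),
      (deriv (fun s => Phi β θ₁ θ₂ s) t = 0 ↔ t = Rfun β θ₁ θ₂) := by
  obtain ⟨hθ₁0, hθ₁1⟩ := hθ₁
  obtain ⟨hθ₂0, hθ₂1⟩ := hθ₂
  set a := Real.exp (β * θ₁) with ha_def
  set b := Real.exp (β * θ₂) with hb_def
  set c := Real.exp (β * (θ₁ + θ₂ - 1)) with hc_def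
  have ha_pos : 0 < a := Real.exp_pos _
  have hb_pos : 0 < b := Real.exp_pos _
  have hc_pos : 0 < c := Real.exp_pos _
  set n := a * b - c with hn_def
  set d := a + b - 1 - c with hd_def
  have hc_ab : c = a * b * Real.exp (-β) := by
    rw [hc_def, ha_def, hb_def, show β * (θ₁ + θ₂ - 1) = β * θ₁ + (β * θ₂ + -β) by ring,
      Real.exp_add, Real.exp_add]
    ring
  -- sign facts
  have hfacts : 0 < (a - 1) * (b - 1) ∧ 0 < (a - 1) * (a - c) ∧ 0 < (b - 1) * (b - c) ∧
      0 < (a - c) * (b - c) ∧ 0 < β * d ∧ 0 < β * n := by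
    rcases hβ.lt_or_gt with hb0 | hb0
    · have ha1 : a < 1 := Real.exp_lt_one_iff.mpr (by nlinarith)
      have hb1 : b < 1 := Real.exp_lt_one_iff.mpr (by nlinarith)
      have hac : a < c := Real.exp_lt_exp.mpr (by nlinarith)
      have hbc : b < c := Real.exp_lt_exp.mpr (by nlinarith)
      refine ⟨by nlinarith, by nlinarith, by nlinarith, by nlinarith, by nlinarith, ?_⟩
      have : a * b < b := by nlinarith
      nlinarith
    · have ha1 : 1 < a := Real.one_lt_exp_iff.mpr (by positivity)
      have hb1 : 1 < b := Real.one_lt_exp_iff.mpr (by positivity)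
      have hac : c < a := Real.exp_lt_exp.mpr (by nlinarith)
      have hbc : c < b := Real.exp_lt_exp.mpr (by nlinarith)
      refine ⟨by nlinarith, by nlinarith, by nlinarith, by nlinarith, by nlinarith, ?_⟩
      have : b < a * b := by nlinarith
      nlinarith
  obtain ⟨h1, h2, h3, h4, hβd, hβn⟩ := hfacts
  have hd_ne : d ≠ 0 := right_ne_zero_of_mul (ne_of_gt hβd)
  have hn_ne : n ≠ 0 := right_ne_zero_of_mul (ne_of_gt hβn)
  have hnd_pos : 0 < n / d := by
    rw [show n / d = (β * n) / (β * d) by rw [mul_div_mul_left _ _ hβ]]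
    exact div_pos hβn hβd
  have hdn_pos : 0 < d / n := by
    rw [show d / n = (β * d) / (β * n) by rw [mul_div_mul_left _ _ hβ]]
    exact div_pos hβd hβn
  -- the key exponential identity for R
  have hRx : Real.exp (β * Rfun β θ₁ θ₂) = n / d := by
    have hexp_negβ : Real.exp (-β) = c / (a * b) := by
      rw [hc_ab]; field_simp
    have h1me : (1:ℝ) - Real.exp (-β) = n / (a * b) := by
      rw [hexp_negβ, hn_def]
      field_simp
    have hinner : 1 - (1 - Real.exp (-β * θ₁)) * (1 - Real.exp (-β * θ₂)) / (1 - Real.exp (-β))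
        = d / n := by
      rw [show -β * θ₁ = -(β * θ₁) by ring, show -β * θ₂ = -(β * θ₂) by ring,
        Real.exp_neg, Real.exp_neg, h1me, ← ha_def, ← hb_def, hd_def, hn_def]
      have hab_ne : a * b - c ≠ 0 := by rw [← hn_def]; exact hn_ne
      field_simp
      ring
    have hR_eq : Rfun β θ₁ θ₂ = -(1 / β) * Real.log (d / n) := by
      simp only [Rfun]
      rw [hinner]
    rw [hR_eq, show β * (-(1 / β) * Real.log (d / n)) = -Real.log (d / n) by field_simp [mul_comm],
      Real.exp_neg, Real.exp_log hdn_pos, inv_div]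
  constructor
  · -- membership
    rcases hβ.lt_or_gt with hb0 | hb0
    · have hd0 : d < 0 := by nlinarith
      have hn0 : n < 0 := by nlinarith
      constructor
      · apply max_lt
        · have hlt : Real.exp (β * Rfun β θ₁ θ₂) < Real.exp (β * 0) := by
            rw [mul_zero, Real.exp_zero, hRx, div_lt_one_of_neg hd0]
            nlinarith
          have := Real.exp_lt_exp.mp hlt
          nlinarith
        · have hlt : Real.exp (β * Rfun β θ₁ θ₂) < Real.exp (β * (θ₁ + θ₂ - 1)) := by
            rw [hRx, ← hc_def, div_lt_iff_of_neg hd0]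
            nlinarith
          have := Real.exp_lt_exp.mp hlt
          nlinarith
      · apply lt_min
        · have hlt : Real.exp (β * θ₁) < Real.exp (β * Rfun β θ₁ θ₂) := by
            rw [hRx, ← ha_def, lt_div_iff_of_neg hd0]
            nlinarith
          have := Real.exp_lt_exp.mp hlt
          nlinarith
        · have hlt : Real.exp (β * θ₂) < Real.exp (β * Rfun β θ₁ θ₂) := by
            rw [hRx, ← hb_def, lt_div_iff_of_neg hd0]
            nlinarith
          have := Real.exp_lt_exp.mp hlt
          nlinarith
    · have hd0 : 0 < d := by nlinarith
      have hn0 : 0 < n := by nlinarith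
      constructor
      · apply max_lt
        · have hlt : Real.exp (β * 0) < Real.exp (β * Rfun β θ₁ θ₂) := by
            rw [mul_zero, Real.exp_zero, hRx, lt_div_iff₀ hd0]
            nlinarith
          have := Real.exp_lt_exp.mp hlt
          nlinarith
        · have hlt : Real.exp (β * (θ₁ + θ₂ - 1)) < Real.exp (β * Rfun β θ₁ θ₂) := by
            rw [hRx, ← hc_def, lt_div_iff₀ hd0]
            nlinarith
          have := Real.exp_lt_exp.mp hlt
          nlinarith
      · apply lt_min
        · have hlt : Real.exp (β * Rfun β θ₁ θ₂) < Real.exp (β * θ₁) := by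
            rw [hRx, ← ha_def, div_lt_iff₀ hd0]
            nlinarith
          have := Real.exp_lt_exp.mp hlt
          nlinarith
        · have hlt : Real.exp (β * Rfun β θ₁ θ₂) < Real.exp (β * θ₂) := by
            rw [hRx, ← hb_def, div_lt_iff₀ hd0]
            nlinarith
          have := Real.exp_lt_exp.mp hlt
          nlinarith
  · -- the critical point characterization
    rintro t ⟨htl, htr⟩
    have ht0 : 0 < t := lt_of_le_of_lt (le_max_left _ _) htl
    have ht12 : 0 < θ₁ - t := sub_pos.mpr (lt_of_lt_of_le htr (min_le_left _ _))
    have ht21 : 0 < θ₂ - t := sub_pos.mpr (lt_of_lt_of_le htr (min_le_right _ _))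
    have ht22 : 0 < 1 - θ₁ - θ₂ + t := by
      have := lt_of_le_of_lt (le_max_right _ _) htl
      linarith
    have hΛ11 : θ₁ * θ₂ ≠ 0 := by positivity
    have hΛ12 : θ₁ * (1 - θ₂) ≠ 0 := by
      have : (0:ℝ) < θ₁ * (1 - θ₂) := by nlinarith
      exact ne_of_gt this
    have hΛ21 : (1 - θ₁) * θ₂ ≠ 0 := by
      have : (0:ℝ) < (1 - θ₁) * θ₂ := by nlinarith
      exact ne_of_gt this
    have hΛ22 : (1 - θ₁) * (1 - θ₂) ≠ 0 := by
      have : (0:ℝ) < (1 - θ₁) * (1 - θ₂) := by nlinarith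
      exact ne_of_gt this
    -- rewrite Phi into an explicit form
    have hPhi : (fun s => Phi β θ₁ θ₂ s) = fun s =>
        pP β + s * Real.log (s / (θ₁ * θ₂)) + (θ₁ - s) * Real.log ((θ₁ - s) / (θ₁ * (1 - θ₂)))
          + (θ₂ - s) * Real.log ((θ₂ - s) / ((1 - θ₁) * θ₂))
          + (1 - θ₁ - θ₂ + s) * Real.log ((1 - θ₁ - θ₂ + s) / ((1 - θ₁) * (1 - θ₂)))
          + s * pP (β * s) + (θ₁ - s) * pP (β * (θ₁ - s)) + (θ₂ - s) * pP (β * (θ₂ - s))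
          + (1 - θ₁ - θ₂ + s) * pP (β * (1 - θ₁ - θ₂ + s))
          - θ₁ * pP (β * θ₁) - θ₂ * pP (β * θ₂)
          - (1 - θ₂) * pP (β * (1 - θ₂)) - (1 - θ₁) * pP (β * (1 - θ₁))
          + β * (θ₁ - s) * (θ₂ - s) := by
      funext s
      show Phit β θ₁ θ₂ s (θ₁ - s) (θ₂ - s) (1 - θ₁ - θ₂ + s) = _
      unfold Phit
      rw [show s + (θ₁ - s) = θ₁ by ring, show s + (θ₂ - s) = θ₂ by ring,
        show (θ₁ - s) + (1 - θ₁ - θ₂ + s) = 1 - θ₂ by ring,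
        show (θ₂ - s) + (1 - θ₁ - θ₂ + s) = 1 - θ₁ by ring]
    -- derivative
    have hl1 : HasDerivAt (fun s : ℝ => θ₁ - s) (-1) t := by
      simpa using (hasDerivAt_id t).const_sub θ₁
    have hl2 : HasDerivAt (fun s : ℝ => θ₂ - s) (-1) t := by
      simpa using (hasDerivAt_id t).const_sub θ₂
    have hl3 : HasDerivAt (fun s : ℝ => 1 - θ₁ - θ₂ + s) 1 t := by
      simpa using (hasDerivAt_id t).const_add (1 - θ₁ - θ₂)
    have hE1 := entropy_hasDeriv (θ₁ * θ₂) t (ne_of_gt ht0) hΛ11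
    have hE2 := (entropy_hasDeriv (θ₁ * (1 - θ₂)) (θ₁ - t) (ne_of_gt ht12) hΛ12).comp t hl1
    have hE3 := (entropy_hasDeriv ((1 - θ₁) * θ₂) (θ₂ - t) (ne_of_gt ht21) hΛ21).comp t hl2
    have hE4 := (entropy_hasDeriv ((1 - θ₁) * (1 - θ₂)) (1 - θ₁ - θ₂ + t)
      (ne_of_gt ht22) hΛ22).comp t hl3
    have hF1 := F_hasDeriv β hβ t
    have hF2 := (F_hasDeriv β hβ (θ₁ - t)).comp t hl1
    have hF3 := (F_hasDeriv β hβ (θ₂ - t)).comp t hl2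
    have hF4 := (F_hasDeriv β hβ (1 - θ₁ - θ₂ + t)).comp t hl3
    have hQ : HasDerivAt (fun s : ℝ => β * (θ₁ - s) * (θ₂ - s)) (β * (2 * t - θ₁ - θ₂)) t := by
      have := (hl1.const_mul β).mul hl2
      refine this.congr_deriv ?_
      ring
    have HD : HasDerivAt (fun s => Phi β θ₁ θ₂ s)
        (Real.log (t / (θ₁ * θ₂)) - Real.log ((θ₁ - t) / (θ₁ * (1 - θ₂)))
          - Real.log ((θ₂ - t) / ((1 - θ₁) * θ₂))
          + Real.log ((1 - θ₁ - θ₂ + t) / ((1 - θ₁) * (1 - θ₂)))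
          + gfun (β * t) - gfun (β * (θ₁ - t)) - gfun (β * (θ₂ - t))
          + gfun (β * (1 - θ₁ - θ₂ + t)) + β * (2 * t - θ₁ - θ₂)) t := by
      rw [hPhi]
      have Hraw := ((((((((((((((hasDerivAt_const t (pP β)).add hE1).add hE2).add hE3).add
        hE4).add hF1).add hF2).add hF3).add hF4).sub_const (θ₁ * pP (β * θ₁))).sub_const
        (θ₂ * pP (β * θ₂))).sub_const ((1 - θ₂) * pP (β * (1 - θ₂)))).sub_const
        ((1 - θ₁) * pP (β * (1 - θ₁)))).add hQ)
      exact Hraw.congr_deriv (by ring)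
    rw [HD.deriv]
    -- simplify the derivative expression
    set x := Real.exp (β * t) with hx_def
    have hx_pos : 0 < x := Real.exp_pos _
    have hA : (1:ℝ) - Real.exp (-(β * t)) = 1 - x⁻¹ := by rw [Real.exp_neg]
    have hBe : Real.exp (-(β * (1 - θ₁ - θ₂ + t))) = c * x⁻¹ := by
      rw [show -(β * (1 - θ₁ - θ₂ + t)) = β * (θ₁ + θ₂ - 1) - β * t by ring, Real.exp_sub,
        ← hc_def, ← hx_def, div_eq_mul_inv]
    have hCe : Real.exp (-(β * (θ₁ - t))) = x / a := by
      rw [show -(β * (θ₁ - t)) = β * t - β * θ₁ by ring, Real.exp_sub, ← ha_def, ← hx_def]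
    have hDe : Real.exp (-(β * (θ₂ - t))) = x / b := by
      rw [show -(β * (θ₂ - t)) = β * t - β * θ₂ by ring, Real.exp_sub, ← hb_def, ← hx_def]
    have hEe : Real.exp (β * (θ₁ + θ₂ - 2 * t)) = a * b / (x * x) := by
      rw [show β * (θ₁ + θ₂ - 2 * t) = β * θ₁ + β * θ₂ - (β * t + β * t) by ring,
        Real.exp_sub, Real.exp_add, Real.exp_add, ← ha_def, ← hb_def, ← hx_def]
    -- nonvanishing of the 1 - exp factors
    have hAne : (1:ℝ) - Real.exp (-(β * t)) ≠ 0 :=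
      one_sub_exp_neg_ne _ (mul_ne_zero hβ (ne_of_gt ht0))
    have hBne : (1:ℝ) - Real.exp (-(β * (1 - θ₁ - θ₂ + t))) ≠ 0 :=
      one_sub_exp_neg_ne _ (mul_ne_zero hβ (ne_of_gt ht22))
    have hCne : (1:ℝ) - Real.exp (-(β * (θ₁ - t))) ≠ 0 :=
      one_sub_exp_neg_ne _ (mul_ne_zero hβ (ne_of_gt ht12))
    have hDne : (1:ℝ) - Real.exp (-(β * (θ₂ - t))) ≠ 0 :=
      one_sub_exp_neg_ne _ (mul_ne_zero hβ (ne_of_gt ht21))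
    have hABpos : 0 < (1 - Real.exp (-(β * t))) * (1 - Real.exp (-(β * (1 - θ₁ - θ₂ + t)))) :=
      one_sub_exp_mul_pos _ _ (by nlinarith [mul_pos (mul_self_pos.mpr hβ) (mul_pos ht0 ht22)])
    have hCDpos : 0 < (1 - Real.exp (-(β * (θ₁ - t)))) * (1 - Real.exp (-(β * (θ₂ - t)))) :=
      one_sub_exp_mul_pos _ _ (by nlinarith [mul_pos (mul_self_pos.mpr hβ) (mul_pos ht12 ht21)])
    -- rewrite the derivative as a difference of logs plus linear part
    have hDval : Real.log (t / (θ₁ * θ₂)) - Real.log ((θ₁ - t) / (θ₁ * (1 - θ₂)))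
          - Real.log ((θ₂ - t) / ((1 - θ₁) * θ₂))
          + Real.log ((1 - θ₁ - θ₂ + t) / ((1 - θ₁) * (1 - θ₂)))
          + gfun (β * t) - gfun (β * (θ₁ - t)) - gfun (β * (θ₂ - t))
          + gfun (β * (1 - θ₁ - θ₂ + t)) + β * (2 * t - θ₁ - θ₂)
        = Real.log ((1 - Real.exp (-(β * t))) * (1 - Real.exp (-(β * (1 - θ₁ - θ₂ + t)))))
          - Real.log ((1 - Real.exp (-(β * (θ₁ - t)))) * (1 - Real.exp (-(β * (θ₂ - t)))))
          - β * (θ₁ + θ₂ - 2 * t) := by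
      simp only [gfun]
      rw [Real.log_div (ne_of_gt ht0) hΛ11,
        Real.log_div (ne_of_gt ht12) hΛ12,
        Real.log_div (ne_of_gt ht21) hΛ21,
        Real.log_div (ne_of_gt ht22) hΛ22,
        Real.log_div hAne (mul_ne_zero hβ (ne_of_gt ht0)),
        Real.log_div hCne (mul_ne_zero hβ (ne_of_gt ht12)),
        Real.log_div hDne (mul_ne_zero hβ (ne_of_gt ht21)),
        Real.log_div hBne (mul_ne_zero hβ (ne_of_gt ht22)),
        Real.log_mul hθ₁0.ne' hθ₂0.ne',
        Real.log_mul hθ₁0.ne' (by linarith : (1:ℝ) - θ₂ ≠ 0),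
        Real.log_mul (by linarith : (1:ℝ) - θ₁ ≠ 0) hθ₂0.ne',
        Real.log_mul (by linarith : (1:ℝ) - θ₁ ≠ 0) (by linarith : (1:ℝ) - θ₂ ≠ 0),
        Real.log_mul hβ (ne_of_gt ht0),
        Real.log_mul hβ (ne_of_gt ht12),
        Real.log_mul hβ (ne_of_gt ht21),
        Real.log_mul hβ (ne_of_gt ht22),
        Real.log_mul hAne hBne,
        Real.log_mul hCne hDne]
      ring
    rw [hDval]
    -- now the equivalence
    have hxd : (Real.log ((1 - Real.exp (-(β * t))) * (1 - Real.exp (-(β * (1 - θ₁ - θ₂ + t)))))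
          - Real.log ((1 - Real.exp (-(β * (θ₁ - t)))) * (1 - Real.exp (-(β * (θ₂ - t)))))
          - β * (θ₁ + θ₂ - 2 * t) = 0) ↔ x * d = n := by
      rw [sub_eq_zero, ← Real.log_exp (β * (θ₁ + θ₂ - 2 * t)),
        ← Real.log_div (ne_of_gt hABpos) (ne_of_gt hCDpos)]
      rw [Real.log_injOn_pos.eq_iff
        (Set.mem_Ioi.mpr (div_pos hABpos hCDpos)) (Set.mem_Ioi.mpr (Real.exp_pos _))]
      rw [div_eq_iff (ne_of_gt hCDpos), hA, hBe, hCe, hDe, hEe]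
      have hxx : x ≠ 0 := ne_of_gt hx_pos
      have ha' : a ≠ 0 := ne_of_gt ha_pos
      have hb' : b ≠ 0 := ne_of_gt hb_pos
      have hkey : (1 - x⁻¹) * (1 - c * x⁻¹) - a * b / (x * x) * ((1 - x / a) * (1 - x / b))
          = (x * d - n) / (x * x) := by
        rw [hd_def, hn_def]
        field_simp
        ring
      constructor
      · intro h
        have h2 : (x * d - n) / (x * x) = 0 := by rw [← hkey, h, sub_self]
        have h3 := (div_eq_zero_iff.mp h2).resolve_right (by positivity)
        linarith [h3]
      · intro h
        have h2 : (x * d - n) / (x * x) = 0 := by rw [h, sub_self, zero_div]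
        have h3 : (1 - x⁻¹) * (1 - c * x⁻¹) - a * b / (x * x) * ((1 - x / a) * (1 - x / b)) = 0 :=
          hkey.trans h2
        linarith [h3]
    rw [hxd]
    constructor
    · intro h
      have hx' : x = n / d := (eq_div_iff hd_ne).mpr h
      have hxe : Real.exp (β * t) = Real.exp (β * Rfun β θ₁ θ₂) := by
        rw [hRx, ← hx_def]
        exact hx'
      exact mul_left_cancel₀ hβ (Real.exp_injective hxe)
    · intro h
      subst h
      have hx' : x = n / d := by rw [hx_def, hRx]
      rw [hx', div_mul_cancel₀ _ hd_ne]

end
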